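/- Let h : ℝ² → ℝ be defined by h(t,x) = cos(πx)·(sin(πx))^{1/3}·sin(πt) on each unit square [i,i+1)×[j,j+1) with i+j even (first coordinate t, second x), and h(t,x) = 0 otherwise. Then h is continuous on ℝ² and has locally bounded two-dimensional variation. -/

import Mathlib

open MeasureTheory Set Filter Topology Real

/-- Mixed second-order increment of a two-variable function over a rectangle. -/
noncomputable def mixedInc (f : ℝ → ℝ → ℝ) (s₁ s₂ x₁ x₂ : ℝ) : ℝ :=
  f s₂ x₂ - f s₂ x₁ - f s₁ x₂ + f s₁ x₁

/-- Two-dimensional variation of `f` on the rectangle `[t,s] × [a,x]`: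
supremum over grid partitions of sums of absolute mixed second-order increments. -/
noncomputable def var2 (f : ℝ → ℝ → ℝ) (t s a x : ℝ) : ENNReal :=
  ⨆ m : ℕ, ⨆ n : ℕ, ⨆ σ : Fin (m+1) → ℝ, ⨆ τ : Fin (n+1) → ℝ,
    ⨆ _ : StrictMono σ ∧ StrictMono τ ∧ σ 0 = t ∧ σ (Fin.last m) = s ∧
      τ 0 = a ∧ τ (Fin.last n) = x,
    ∑ i : Fin m, ∑ j : Fin n,
      ENNReal.ofReal |mixedInc f (σ i.castSucc) (σ i.succ) (τ j.castSucc) (τ j.succ)|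

/-- One-dimensional total variation of `g` on `[a,b]`. -/
noncomputable def var1 (g : ℝ → ℝ) (a b : ℝ) : ENNReal :=
  ⨆ n : ℕ, ⨆ τ : Fin (n+1) → ℝ,
    ⨆ _ : StrictMono τ ∧ τ 0 = a ∧ τ (Fin.last n) = b,
    ∑ j : Fin n, ENNReal.ofReal |g (τ j.succ) - g (τ j.castSucc)|

/-- `f` is monotonically increasing in the two-dimensional sense. -/
def Inc2 (f : ℝ → ℝ → ℝ) : Prop :=
  ∀ s₁ s₂ x₁ x₂ : ℝ, s₁ ≤ s₂ → x₁ ≤ x₂ → 0 ≤ mixedInc f s₁ s₂ x₁ x₂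

/-- Joint left continuity of a two-variable function at `(s,x)`:
continuity along monotone approach from below in both variables. -/
def LeftCont2At (f : ℝ → ℝ → ℝ) (s x : ℝ) : Prop :=
  ∀ u v : ℕ → ℝ, Monotone u → Monotone v → (∀ k, u k ≤ s) → (∀ k, v k ≤ x) →
    Tendsto u atTop (𝓝 s) → Tendsto v atTop (𝓝 x) →
    Tendsto (fun k => f (u k) (v k)) atTop (𝓝 (f s x))

/-- `g` has left derivative `d` at `x`. -/
def HasLeftDeriv (g : ℝ → ℝ) (x d : ℝ) : Prop :=
  Tendsto (fun h => (g x - g (x - h)) / h) (𝓝[>] (0:ℝ)) (𝓝 d)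
/-- The real cube root. -/
noncomputable def cbrt (y : ℝ) : ℝ := Real.sign y * |y| ^ ((1:ℝ)/3)

lemma cbrt_of_nonneg {y : ℝ} (hy : 0 ≤ y) : cbrt y = y ^ ((1:ℝ)/3) := by
  rcases eq_or_lt_of_le hy with h|h
  · simp [cbrt, ← h, Real.sign_zero, Real.zero_rpow (by norm_num : (1:ℝ)/3 ≠ 0)]
  · simp [cbrt, Real.sign_of_pos h, abs_of_pos h]

lemma cbrt_neg (y : ℝ) : cbrt (-y) = - cbrt y := by
  rcases lt_trichotomy y 0 with h|h|h
  · simp [cbrt, Real.sign_of_pos (neg_pos.mpr h), Real.sign_of_neg h, abs_neg]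
  · simp [h, cbrt]
  · simp [cbrt, Real.sign_of_neg (neg_neg_iff_pos.mpr h), Real.sign_of_pos h, abs_neg]

lemma continuous_cbrt : Continuous cbrt := by
  rw [continuous_iff_continuousAt]
  intro y
  have hc : Continuous fun z : ℝ => |z| ^ ((1:ℝ)/3) :=
    continuous_abs.rpow_const (fun x => Or.inr (by norm_num))
  rcases lt_trichotomy y 0 with hy|hy|hy
  · have h1 : ContinuousAt (fun z : ℝ => -(|z| ^ ((1:ℝ)/3))) y := (hc.neg).continuousAt
    apply h1.congr
    filter_upwards [Iio_mem_nhds hy] with z hz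
    simp [cbrt, Real.sign_of_neg hz]
  · subst hy
    have h0 : cbrt 0 = 0 := by simp [cbrt, Real.sign_zero]
    rw [ContinuousAt, h0]
    apply squeeze_zero_norm (a := fun z : ℝ => |z| ^ ((1:ℝ)/3))
    · intro z
      have : ‖cbrt z‖ = |Real.sign z| * |z| ^ ((1:ℝ)/3) := by
        rw [cbrt]; rw [Real.norm_eq_abs, abs_mul, abs_of_nonneg (Real.rpow_nonneg (abs_nonneg z) _)]
      rw [this]
      have h2 : |Real.sign z| ≤ 1 := by
        rcases lt_trichotomy z 0 with h|h|h
        · simp [Real.sign_of_neg h]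
        · simp [h, Real.sign_zero]
        · simp [Real.sign_of_pos h]
      calc |Real.sign z| * |z| ^ ((1:ℝ)/3) ≤ 1 * |z| ^ ((1:ℝ)/3) :=
            mul_le_mul_of_nonneg_right h2 (Real.rpow_nonneg (abs_nonneg z) _)
        _ = |z| ^ ((1:ℝ)/3) := one_mul _
    · have := hc.continuousAt (x := (0:ℝ))
      rw [ContinuousAt] at this
      simpa [Real.zero_rpow (by norm_num : (1:ℝ)/3 ≠ 0)] using this
  · have h1 : ContinuousAt (fun z : ℝ => |z| ^ ((1:ℝ)/3)) y := hc.continuousAt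
    apply h1.congr
    filter_upwards [Ioi_mem_nhds hy] with z hz
    simp [cbrt, Real.sign_of_pos hz]

section
-- trig shift lemmas
lemma sin_shift_even (m : ℤ) (x : ℝ) : Real.sin (π * (x + 2*m)) = Real.sin (π * x) := by
  have : π * (x + 2*m) = π * x + m * (2 * π) := by ring
  rw [this, Real.sin_add_int_mul_two_pi]

lemma cos_shift_even (m : ℤ) (x : ℝ) : Real.cos (π * (x + 2*m)) = Real.cos (π * x) := by
  have : π * (x + 2*m) = π * x + m * (2 * π) := by ring
  rw [this, Real.cos_add_int_mul_two_pi]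

lemma sin_shift_odd (m : ℤ) (x : ℝ) : Real.sin (π * (x + (2*m+1))) = - Real.sin (π * x) := by
  have : π * (x + (2*m+1)) = (π * x + π) + m * (2 * π) := by push_cast; ring
  rw [this, Real.sin_add_int_mul_two_pi, Real.sin_add_pi]

lemma cos_shift_odd (m : ℤ) (x : ℝ) : Real.cos (π * (x + (2*m+1))) = - Real.cos (π * x) := by
  have : π * (x + (2*m+1)) = (π * x + π) + m * (2 * π) := by push_cast; ring
  rw [this, Real.cos_add_int_mul_two_pi, Real.cos_add_pi]

lemma sin_nonneg_unit {x : ℝ} (h1 : 0 ≤ x) (h2 : x ≤ 1) : 0 ≤ Real.sin (π * x) :=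
  Real.sin_nonneg_of_nonneg_of_le_pi (by positivity)
    (by nlinarith [Real.pi_pos])

/-- on `[k, k+1]` with `k` even, `sin (π x) ≥ 0`. -/
lemma sin_sign_even {k : ℤ} (hk : Even k) {x : ℝ} (h1 : (k:ℝ) ≤ x) (h2 : x ≤ k + 1) :
    0 ≤ Real.sin (π * x) := by
  obtain ⟨m, hm⟩ := hk
  have hx : x = (x - k) + 2*m := by push_cast [hm]; ring
  rw [hx, sin_shift_even]
  exact sin_nonneg_unit (by linarith) (by linarith)

lemma sin_sign_odd {k : ℤ} (hk : Odd k) {x : ℝ} (h1 : (k:ℝ) ≤ x) (h2 : x ≤ k + 1) :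
    Real.sin (π * x) ≤ 0 := by
  obtain ⟨m, hm⟩ := hk
  have hx : x = (x - k) + (2*m+1) := by push_cast [hm]; ring
  rw [hx, sin_shift_odd]
  have := sin_nonneg_unit (x := x - k) (by linarith) (by linarith)
  linarith

lemma abs_sin_le_abs (t : ℝ) : |Real.sin t| ≤ |t| := by
  rcases eq_or_ne t 0 with rfl|h
  · simp
  · exact (Real.abs_sin_lt_abs h).le

lemma sin_lip (a b : ℝ) : |Real.sin a - Real.sin b| ≤ |a - b| := by
  rw [Real.sin_sub_sin]
  have h1 : |Real.sin ((a-b)/2)| ≤ |(a-b)/2| := abs_sin_le_abs _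
  have h2 : |Real.cos ((a+b)/2)| ≤ 1 := Real.abs_cos_le_one _
  have h3 : |(a-b)/2| = |a-b|/2 := by rw [abs_div]; norm_num
  calc |2 * Real.sin ((a-b)/2) * Real.cos ((a+b)/2)|
      = 2 * |Real.sin ((a-b)/2)| * |Real.cos ((a+b)/2)| := by
        rw [abs_mul, abs_mul, abs_two]
    _ ≤ 2 * |(a-b)/2| * 1 := by
        apply mul_le_mul _ h2 (abs_nonneg _) (by positivity)
        exact mul_le_mul_of_nonneg_left h1 (by norm_num)
    _ = |a - b| := by rw [h3]; ring
end

noncomputable def phiF (x : ℝ) : ℝ := Real.cos (π * x) * cbrt (Real.sin (π * x))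
noncomputable def chiF (x : ℝ) : ℝ := Real.cos (π * x) * |Real.sin (π * x)| ^ ((1:ℝ)/3)

lemma chi_eq_phi {x : ℝ} (h : 0 ≤ Real.sin (π * x)) : chiF x = phiF x := by
  rw [chiF, phiF, cbrt_of_nonneg h, abs_of_nonneg h]

lemma chi_eq_neg_phi {x : ℝ} (h : Real.sin (π * x) ≤ 0) : chiF x = - phiF x := by
  have h3 : cbrt (Real.sin (π*x)) = -((-Real.sin (π*x)) ^ ((1:ℝ)/3)) := by
    rw [← cbrt_of_nonneg (neg_nonneg.mpr h), ← cbrt_neg, neg_neg]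
  rw [chiF, phiF, h3, abs_of_nonpos h]
  ring

lemma continuous_phi : Continuous phiF :=
  (Real.continuous_cos.comp (continuous_const.mul continuous_id)).mul
    (continuous_cbrt.comp (Real.continuous_sin.comp (continuous_const.mul continuous_id)))

lemma continuous_chi : Continuous chiF :=
  (Real.continuous_cos.comp (continuous_const.mul continuous_id)).mul
    ((continuous_abs.comp (Real.continuous_sin.comp (continuous_const.mul continuous_id))).rpow_const
      (fun x => Or.inr (by norm_num)))

open Classical in
lemma key_eq (t x : ℝ) :
    (if ∃ i j : ℤ, Even (i + j) ∧ t ∈ Set.Ico (i : ℝ) (i + 1) ∧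
          x ∈ Set.Ico (j : ℝ) (j + 1) then
        Real.cos (π * x) * cbrt (Real.sin (π * x)) * Real.sin (π * t)
      else 0)
      = (Real.sin (π * t) * phiF x + |Real.sin (π * t)| * chiF x) / 2 := by
  have hcond : (∃ i j : ℤ, Even (i + j) ∧ t ∈ Set.Ico (i : ℝ) (i + 1) ∧
      x ∈ Set.Ico (j : ℝ) (j + 1)) ↔ Even (⌊t⌋ + ⌊x⌋) := by
    constructor
    · rintro ⟨i, j, he, ht, hx⟩
      have hi : ⌊t⌋ = i := Int.floor_eq_iff.mpr ⟨ht.1, by exact_mod_cast ht.2⟩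
      have hj : ⌊x⌋ = j := Int.floor_eq_iff.mpr ⟨hx.1, by exact_mod_cast hx.2⟩
      rw [hi, hj]; exact he
    · intro he
      exact ⟨⌊t⌋, ⌊x⌋, he, ⟨Int.floor_le t, by exact_mod_cast Int.lt_floor_add_one t⟩,
        ⟨Int.floor_le x, by exact_mod_cast Int.lt_floor_add_one x⟩⟩
  have htlow : (⌊t⌋ : ℝ) ≤ t := Int.floor_le t
  have hthigh : t ≤ (⌊t⌋ : ℝ) + 1 := (Int.lt_floor_add_one t).le
  have hxlow : (⌊x⌋ : ℝ) ≤ x := Int.floor_le x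
  have hxhigh : x ≤ (⌊x⌋ : ℝ) + 1 := (Int.lt_floor_add_one x).le
  rcases Int.even_or_odd ⌊t⌋ with hi|hi <;> rcases Int.even_or_odd ⌊x⌋ with hj|hj
  · -- both even
    have hst : 0 ≤ Real.sin (π * t) := sin_sign_even hi htlow hthigh
    have hsx : 0 ≤ Real.sin (π * x) := sin_sign_even hj hxlow hxhigh
    rw [if_pos (hcond.mpr (hi.add hj)), abs_of_nonneg hst, chi_eq_phi hsx, phiF]
    ring
  · -- t even, x odd : condition false
    have hne : ¬ Even (⌊t⌋ + ⌊x⌋) := by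
      rw [Int.even_add]
      simp [hi, Int.not_even_iff_odd.mpr hj]
    have hst : 0 ≤ Real.sin (π * t) := sin_sign_even hi htlow hthigh
    have hsx : Real.sin (π * x) ≤ 0 := sin_sign_odd hj hxlow hxhigh
    rw [if_neg (fun hc => hne (hcond.mp hc)), abs_of_nonneg hst, chi_eq_neg_phi hsx]
    ring
  · -- t odd, x even : condition false
    have hne : ¬ Even (⌊t⌋ + ⌊x⌋) := by
      rw [Int.even_add]
      simp [hj, Int.not_even_iff_odd.mpr hi]
    have hst : Real.sin (π * t) ≤ 0 := sin_sign_odd hi htlow hthigh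
    have hsx : 0 ≤ Real.sin (π * x) := sin_sign_even hj hxlow hxhigh
    rw [if_neg (fun hc => hne (hcond.mp hc)), abs_of_nonpos hst, chi_eq_phi hsx]
    ring
  · -- both odd
    have hst : Real.sin (π * t) ≤ 0 := sin_sign_odd hi htlow hthigh
    have hsx : Real.sin (π * x) ≤ 0 := sin_sign_odd hj hxlow hxhigh
    rw [if_pos (hcond.mpr (hi.add_odd hj)), abs_of_nonpos hst, chi_eq_neg_phi hsx, phiF]
    ring

noncomputable def phi0 (x : ℝ) : ℝ := Real.cos (π * x) * Real.sin (π * x) ^ ((1:ℝ)/3)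

lemma continuous_phi0 : Continuous phi0 :=
  (Real.continuous_cos.comp (continuous_const.mul continuous_id)).mul
    ((Real.continuous_sin.comp (continuous_const.mul continuous_id)).rpow_const
      (fun _ => Or.inr (by norm_num)))

lemma phi0_deriv {x : ℝ} (hs : 0 < Real.sin (π * x)) :
    HasDerivAt phi0
      (π * Real.sin (π * x) ^ (-(2:ℝ)/3) *
        (1/3 * Real.cos (π * x)^2 - Real.sin (π * x)^2)) x := by
  have hπ : HasDerivAt (fun y : ℝ => π * y) π x := by
    simpa using (hasDerivAt_id x).const_mul π
  have hsin : HasDerivAt (fun y : ℝ => Real.sin (π * y)) (Real.cos (π * x) * π) x :=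
    (Real.hasDerivAt_sin (π * x)).comp x hπ
  have hcos : HasDerivAt (fun y : ℝ => Real.cos (π * y)) (-Real.sin (π * x) * π) x :=
    (Real.hasDerivAt_cos (π * x)).comp x hπ
  have hr : HasDerivAt (fun y : ℝ => Real.sin (π * y) ^ ((1:ℝ)/3))
      ((Real.cos (π * x) * π) * ((1:ℝ)/3) * Real.sin (π * x) ^ ((1:ℝ)/3 - 1)) x :=
    hsin.rpow_const (Or.inl hs.ne')
  have hmul := hcos.mul hr
  have e1 : Real.sin (π*x) ^ ((1:ℝ)/3) = Real.sin (π*x) ^ (-(2:ℝ)/3) * Real.sin (π*x) := by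
    rw [← Real.rpow_add_one hs.ne' (-(2:ℝ)/3)]
    norm_num
  have e2 : Real.sin (π*x) ^ ((1:ℝ)/3 - 1) = Real.sin (π*x) ^ (-(2:ℝ)/3) := by
    norm_num
  refine HasDerivAt.congr_deriv hmul ?_
  rw [e1, e2]
  ring

lemma s_pos {x : ℝ} (h1 : 0 < x) (h2 : x < 1) : 0 < Real.sin (π * x) :=
  Real.sin_pos_of_pos_of_lt_pi (by positivity) (by nlinarith [Real.pi_pos])

lemma s_lt_half {x : ℝ} (h1 : 0 < x) (h2 : x < 1/6) : Real.sin (π * x) < 1/2 := by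
  have hpi := Real.pi_pos
  have m1 : π * x ∈ Icc (-(π/2)) (π/2) := ⟨by nlinarith, by nlinarith⟩
  have m2 : π / 6 ∈ Icc (-(π/2)) (π/2) := ⟨by nlinarith, by nlinarith⟩
  have := Real.strictMonoOn_sin m1 m2 (by nlinarith)
  rwa [Real.sin_pi_div_six] at this

lemma s_gt_half {x : ℝ} (h1 : 1/6 < x) (h2 : x < 5/6) : 1/2 < Real.sin (π * x) := by
  have hpi := Real.pi_pos
  have e : Real.sin (π * x) = Real.cos |π/2 - π*x| := by
    rw [Real.cos_abs, Real.cos_pi_div_two_sub]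
  have m1 : |π/2 - π*x| ∈ Icc (0:ℝ) π := ⟨abs_nonneg _, by
    rw [abs_le]; constructor <;> nlinarith⟩
  have m2 : π / 3 ∈ Icc (0:ℝ) π := ⟨by nlinarith, by nlinarith⟩
  have hlt : |π/2 - π*x| < π/3 := by
    rw [abs_lt]; constructor <;> nlinarith
  have := Real.strictAntiOn_cos m1 m2 hlt
  rw [Real.cos_pi_div_three] at this
  rw [e]; exact this

lemma phi0_mono1 : StrictMonoOn phi0 (Icc (0:ℝ) (1/6)) := by
  apply strictMonoOn_of_deriv_pos (convex_Icc _ _) continuous_phi0.continuousOn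
  rw [interior_Icc]
  intro x hx
  have hs : 0 < Real.sin (π * x) := s_pos hx.1 (by linarith [hx.2])
  have hh : Real.sin (π * x) < 1/2 := s_lt_half hx.1 hx.2
  rw [(phi0_deriv hs).deriv]
  have h1 : (0:ℝ) < π * Real.sin (π * x) ^ (-(2:ℝ)/3) :=
    mul_pos Real.pi_pos (Real.rpow_pos_of_pos hs _)
  have h2 : 0 < 1/3 * Real.cos (π * x)^2 - Real.sin (π * x)^2 := by
    nlinarith [Real.sin_sq_add_cos_sq (π * x)]
  exact mul_pos h1 h2

lemma phi0_anti : StrictAntiOn phi0 (Icc (1/6:ℝ) (5/6)) := by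
  apply strictAntiOn_of_deriv_neg (convex_Icc _ _) continuous_phi0.continuousOn
  rw [interior_Icc]
  intro x hx
  have hh : 1/2 < Real.sin (π * x) := s_gt_half hx.1 hx.2
  have hs : 0 < Real.sin (π * x) := by linarith
  rw [(phi0_deriv hs).deriv]
  have h1 : (0:ℝ) < π * Real.sin (π * x) ^ (-(2:ℝ)/3) :=
    mul_pos Real.pi_pos (Real.rpow_pos_of_pos hs _)
  have h2 : 1/3 * Real.cos (π * x)^2 - Real.sin (π * x)^2 < 0 := by
    nlinarith [Real.sin_sq_add_cos_sq (π * x)]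
  exact mul_neg_of_pos_of_neg h1 h2

lemma phi0_mono2 : StrictMonoOn phi0 (Icc (5/6:ℝ) 1) := by
  apply strictMonoOn_of_deriv_pos (convex_Icc _ _) continuous_phi0.continuousOn
  rw [interior_Icc]
  intro x hx
  have e : Real.sin (π * x) = Real.sin (π * (1 - x)) := by
    rw [show π * (1 - x) = π - π * x by ring, Real.sin_pi_sub]
  have hs : 0 < Real.sin (π * x) := by
    rw [e]; exact s_pos (by linarith [hx.2]) (by linarith [hx.1])
  have hh : Real.sin (π * x) < 1/2 := by
    rw [e]; exact s_lt_half (by linarith [hx.2]) (by linarith [hx.1])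
  rw [(phi0_deriv hs).deriv]
  have h1 : (0:ℝ) < π * Real.sin (π * x) ^ (-(2:ℝ)/3) :=
    mul_pos Real.pi_pos (Real.rpow_pos_of_pos hs _)
  have h2 : 0 < 1/3 * Real.cos (π * x)^2 - Real.sin (π * x)^2 := by
    nlinarith [Real.sin_sq_add_cos_sq (π * x)]
  exact mul_pos h1 h2

lemma phi_eq_phi0 : Set.EqOn phiF phi0 (Icc (0:ℝ) 1) := by
  intro x hx
  rw [phiF, phi0, cbrt_of_nonneg (sin_nonneg_unit hx.1 hx.2)]

-- variation lemmas
lemma evar_neg (f : ℝ → ℝ) (s : Set ℝ) :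
    eVariationOn (fun x => -(f x)) s = eVariationOn f s := by
  unfold eVariationOn
  exact iSup_congr fun p => Finset.sum_congr rfl fun i _ => edist_neg_neg _ _

lemma evar_mono_piece {f : ℝ → ℝ} {a b : ℝ} (h : MonotoneOn f (Icc a b)) (hab : a ≤ b) :
    eVariationOn f (Icc a b) ≠ ⊤ := by
  have := h.eVariationOn_le (left_mem_Icc.mpr hab) (right_mem_Icc.mpr hab)
  rw [Set.inter_self] at this
  exact (this.trans_lt ENNReal.ofReal_lt_top).ne

lemma evar_anti_piece {f : ℝ → ℝ} {a b : ℝ} (h : AntitoneOn f (Icc a b)) (hab : a ≤ b) :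
    eVariationOn f (Icc a b) ≠ ⊤ := by
  rw [← evar_neg]
  exact evar_mono_piece h.neg hab

lemma evar_split (f : ℝ → ℝ) {a b c : ℝ} (hab : a ≤ b) (hbc : b ≤ c) :
    eVariationOn f (Icc a c) = eVariationOn f (Icc a b) + eVariationOn f (Icc b c) := by
  have := eVariationOn.Icc_add_Icc f (s := univ) hab hbc (mem_univ b)
  simpa [Set.univ_inter] using this.symm

lemma phi_bv01 : eVariationOn phiF (Icc (0:ℝ) 1) ≠ ⊤ := by
  have m1 : MonotoneOn phiF (Icc (0:ℝ) (1/6)) :=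
    (phi0_mono1.monotoneOn).congr (fun x hx =>
      (phi_eq_phi0 (Icc_subset_Icc le_rfl (by norm_num) hx)).symm)
  have m2 : AntitoneOn phiF (Icc (1/6:ℝ) (5/6)) :=
    (phi0_anti.antitoneOn).congr (fun x hx =>
      (phi_eq_phi0 (Icc_subset_Icc (by norm_num) (by norm_num) hx)).symm)
  have m3 : MonotoneOn phiF (Icc (5/6:ℝ) 1) :=
    (phi0_mono2.monotoneOn).congr (fun x hx =>
      (phi_eq_phi0 (Icc_subset_Icc (by norm_num) le_rfl hx)).symm)
  rw [evar_split phiF (by norm_num : (0:ℝ) ≤ 1/6) (by norm_num : (1/6:ℝ) ≤ 1),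
    evar_split phiF (by norm_num : (1/6:ℝ) ≤ 5/6) (by norm_num : (5/6:ℝ) ≤ 1)]
  refine ENNReal.add_ne_top.mpr ⟨evar_mono_piece m1 (by norm_num), ENNReal.add_ne_top.mpr
    ⟨evar_anti_piece m2 (by norm_num), evar_mono_piece m3 (by norm_num)⟩⟩

lemma phi_periodic (k : ℤ) (x : ℝ) : phiF (x + k) = phiF x := by
  rcases Int.even_or_odd k with ⟨m, hm⟩|⟨m, hm⟩
  · have : (k:ℝ) = 2*m := by push_cast [hm]; ring
    rw [phiF, this, sin_shift_even, cos_shift_even, phiF]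
  · have : (k:ℝ) = 2*m+1 := by push_cast [hm]; ring
    rw [phiF, this, sin_shift_odd, cos_shift_odd, cbrt_neg, phiF]
    ring

lemma evar_shift (f : ℝ → ℝ) (c : ℝ) (a b : ℝ) :
    eVariationOn f (Icc (a + c) (b + c)) = eVariationOn (fun x => f (x + c)) (Icc a b) := by
  have h := eVariationOn.comp_eq_of_monotoneOn f (fun x : ℝ => x + c)
    ((monotone_id.add_const c).monotoneOn (Icc a b))
  rw [Set.image_add_const_Icc] at h
  exact h.symm

lemma phi_bv_int (k : ℤ) : eVariationOn phiF (Icc (k:ℝ) (k+1)) ≠ ⊤ := by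
  have h := evar_shift phiF (k:ℝ) 0 1
  rw [zero_add] at h
  rw [show ((k:ℝ)+1) = 1 + (k:ℝ) by ring, h,
    show (fun x : ℝ => phiF (x + k)) = phiF from funext fun x => phi_periodic k x]
  exact phi_bv01

lemma chi_bv_int (k : ℤ) : eVariationOn chiF (Icc (k:ℝ) (k+1)) ≠ ⊤ := by
  rcases Int.even_or_odd k with hk|hk
  · have e : eVariationOn chiF (Icc (k:ℝ) (k+1)) = eVariationOn phiF (Icc (k:ℝ) (k+1)) :=
      eVariationOn.eq_of_eqOn (fun x hx => chi_eq_phi (sin_sign_even hk hx.1 hx.2))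
    rw [e]; exact phi_bv_int k
  · have e : eVariationOn chiF (Icc (k:ℝ) (k+1)) =
        eVariationOn (fun x => -(phiF x)) (Icc (k:ℝ) (k+1)) :=
      eVariationOn.eq_of_eqOn (fun x hx => chi_eq_neg_phi (sin_sign_odd hk hx.1 hx.2))
    rw [e, evar_neg]; exact phi_bv_int k

lemma bv_all {f : ℝ → ℝ} (hf : ∀ k : ℤ, eVariationOn f (Icc (k:ℝ) (k+1)) ≠ ⊤) (a b : ℝ) :
    eVariationOn f (Icc a b) ≠ ⊤ := by
  have key : ∀ n : ℕ, ∀ k : ℤ, eVariationOn f (Icc (k:ℝ) (k + n)) ≠ ⊤ := by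
    intro n
    induction n with
    | zero =>
      intro k
      simp only [Nat.cast_zero, add_zero]
      rw [eVariationOn.subsingleton f (by simp [Set.Icc_self] : (Icc (k:ℝ) k).Subsingleton)]
      exact ENNReal.zero_ne_top
    | succ n ih =>
      intro k
      have h2 := hf (k + n)
      have e : eVariationOn f (Icc (k:ℝ) (k + (n+1:ℕ))) =
          eVariationOn f (Icc (k:ℝ) (k + n)) + eVariationOn f (Icc ((k:ℝ)+n) ((k:ℝ)+n+1)) := by
        push_cast
        rw [show (k:ℝ) + ((n:ℝ)+1) = (k:ℝ)+(n:ℝ)+1 by ring]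
        exact evar_split f (b := (k:ℝ)+(n:ℝ)) (by linarith [Nat.cast_nonneg (α := ℝ) n])
          (by linarith)
      rw [e]
      refine ENNReal.add_ne_top.mpr ⟨ih k, ?_⟩
      have : ((k + n : ℤ) : ℝ) = (k:ℝ) + n := by push_cast; ring
      rw [← this]
      simpa using h2
  have hsub : Icc a b ⊆ Icc ((⌊a⌋:ℝ)) ((⌊a⌋:ℝ) + (⌈b - ⌊a⌋⌉₊ : ℕ)) := by
    apply Icc_subset_Icc (Int.floor_le a)
    have := Nat.le_ceil (b - (⌊a⌋:ℝ))
    linarith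
  intro htop
  have := eVariationOn.mono f hsub
  rw [htop] at this
  exact key _ _ (top_le_iff.mp this)

def clampF (m : ℕ) (j : ℕ) : Fin (m+1) := ⟨min j m, Nat.lt_succ_of_le (min_le_right _ _)⟩

lemma clampF_succ {m : ℕ} (i : Fin m) : clampF m (↑i+1) = i.succ :=
  Fin.ext (by simp [clampF, Nat.min_eq_left (Nat.succ_le_of_lt i.isLt)])

lemma clampF_castSucc {m : ℕ} (i : Fin m) : clampF m ↑i = i.castSucc :=
  Fin.ext (by simp [clampF, Nat.min_eq_left (le_of_lt i.isLt)])

lemma clampF_last (m : ℕ) : clampF m m = Fin.last m := Fin.ext (by simp [clampF])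

lemma clampF_zero (m : ℕ) : clampF m 0 = 0 := Fin.ext (by simp [clampF])

lemma clampF_mono (m : ℕ) : Monotone (clampF m) := by
  intro c d hcd
  simp only [clampF, Fin.mk_le_mk]
  exact min_le_min hcd le_rfl

lemma fin_telescope {m : ℕ} (σ : Fin (m+1) → ℝ) :
    ∑ i : Fin m, (σ i.succ - σ i.castSucc) = σ (Fin.last m) - σ 0 := by
  calc ∑ i : Fin m, (σ i.succ - σ i.castSucc)
      = ∑ i : Fin m, (σ (clampF m (↑i+1)) - σ (clampF m ↑i)) :=
        Finset.sum_congr rfl fun i _ => by rw [clampF_succ, clampF_castSucc]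
    _ = ∑ i ∈ Finset.range m, (σ (clampF m (i+1)) - σ (clampF m i)) :=
        Fin.sum_univ_eq_sum_range (fun j => σ (clampF m (j+1)) - σ (clampF m j)) m
    _ = σ (clampF m m) - σ (clampF m 0) := Finset.sum_range_sub (fun j => σ (clampF m j)) m
    _ = σ (Fin.last m) - σ 0 := by rw [clampF_last, clampF_zero]

lemma sum_abs_le_evar (g : ℝ → ℝ) {n : ℕ} (τ : Fin (n+1) → ℝ) (hτ : Monotone τ) {a b : ℝ}
    (h0 : τ 0 = a) (hl : τ (Fin.last n) = b) :
    ∑ j : Fin n, ENNReal.ofReal |g (τ j.succ) - g (τ j.castSucc)| ≤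
      eVariationOn g (Icc a b) := by
  have hum : Monotone (fun j => τ (clampF n j)) := hτ.comp (clampF_mono n)
  have hmem : ∀ j, τ (clampF n j) ∈ Icc a b := fun j =>
    ⟨h0 ▸ hτ (Fin.zero_le _), hl ▸ hτ (Fin.le_last _)⟩
  have e : ∑ j : Fin n, ENNReal.ofReal |g (τ j.succ) - g (τ j.castSucc)| =
      ∑ j ∈ Finset.range n, edist (g (τ (clampF n (j+1)))) (g (τ (clampF n j))) := by
    rw [← Fin.sum_univ_eq_sum_range (fun j => edist (g (τ (clampF n (j+1)))) (g (τ (clampF n j)))) n]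
    refine Finset.sum_congr rfl fun j _ => ?_
    rw [clampF_succ, clampF_castSucc, edist_dist, Real.dist_eq]
  rw [e]
  exact eVariationOn.sum_le (f := g) (n := n) hum hmem

open Classical in
/-- The function equal to `cos(πx)(sin(πx))^{1/3} sin(πt)` on unit squares `[i,i+1)×[j,j+1)`
with `i+j` even and `0` otherwise is continuous on `ℝ²` and has locally bounded
two-dimensional variation. -/
theorem continuous_and_bounded_variation_example :
    let h : ℝ → ℝ → ℝ := fun t x =>
      if ∃ i j : ℤ, Even (i + j) ∧ t ∈ Set.Ico (i : ℝ) (i + 1) ∧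
          x ∈ Set.Ico (j : ℝ) (j + 1) then
        Real.cos (π * x) * cbrt (Real.sin (π * x)) * Real.sin (π * t)
      else 0
    Continuous (fun p : ℝ × ℝ => h p.1 p.2) ∧
      (∀ t₁ t₂ a b : ℝ, t₁ ≤ t₂ → a ≤ b → var2 h t₁ t₂ a b ≠ ⊤) := by
  intro h
  have hh : ∀ t x, h t x = (Real.sin (π * t) * phiF x + |Real.sin (π * t)| * chiF x) / 2 :=
    fun t x => key_eq t x
  constructor
  · have he : (fun p : ℝ × ℝ => h p.1 p.2)
        = fun p : ℝ × ℝ => (Real.sin (π * p.1) * phiF p.2 + |Real.sin (π * p.1)| * chiF p.2) / 2 :=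
      funext fun p => hh p.1 p.2
    rw [he]
    apply Continuous.div_const
    apply Continuous.add
    · exact (Real.continuous_sin.comp (continuous_const.mul continuous_fst)).mul
        (continuous_phi.comp continuous_snd)
    · exact (continuous_abs.comp (Real.continuous_sin.comp
        (continuous_const.mul continuous_fst))).mul (continuous_chi.comp continuous_snd)
  · intro t₁ t₂ a b ht hab
    have hVφ := bv_all phi_bv_int a b
    have hVχ := bv_all chi_bv_int a b
    have hWne : eVariationOn phiF (Icc a b) + eVariationOn chiF (Icc a b) ≠ ⊤ :=
      ENNReal.add_ne_top.mpr ⟨hVφ, hVχ⟩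
    have hVne : ENNReal.ofReal (π/2 * (t₂ - t₁)) *
        (eVariationOn phiF (Icc a b) + eVariationOn chiF (Icc a b)) ≠ ⊤ :=
      ENNReal.mul_ne_top ENNReal.ofReal_ne_top hWne
    refine ne_top_of_le_ne_top hVne ?_
    simp only [var2]
    refine iSup_le fun m => iSup_le fun n => iSup_le fun σ => iSup_le fun τ => iSup_le ?_
    rintro ⟨hσ, hτ, hσ0, hσl, hτ0, hτl⟩
    have key : ∀ (i : Fin m) (j : Fin n),
        ENNReal.ofReal |mixedInc h (σ i.castSucc) (σ i.succ) (τ j.castSucc) (τ j.succ)| ≤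
        ENNReal.ofReal (π/2 * (σ i.succ - σ i.castSucc)) *
          (ENNReal.ofReal |phiF (τ j.succ) - phiF (τ j.castSucc)|
            + ENNReal.ofReal |chiF (τ j.succ) - chiF (τ j.castSucc)|) := by
      intro i j
      set s₁ := σ i.castSucc with hs₁
      set s₂ := σ i.succ with hs₂
      set x₁ := τ j.castSucc with hx₁
      set x₂ := τ j.succ with hx₂
      have hs : s₁ ≤ s₂ := hσ.monotone (Fin.castSucc_le_succ i)
      have hc0 : (0:ℝ) ≤ π/2 * (s₂ - s₁) := by
        have := Real.pi_pos
        nlinarith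
      have e : mixedInc h s₁ s₂ x₁ x₂ =
          ((Real.sin (π*s₂) - Real.sin (π*s₁)) * (phiF x₂ - phiF x₁)
            + (|Real.sin (π*s₂)| - |Real.sin (π*s₁)|) * (chiF x₂ - chiF x₁)) / 2 := by
        simp only [mixedInc, hh]
        ring
      have hA : |Real.sin (π*s₂) - Real.sin (π*s₁)| ≤ π * (s₂ - s₁) := by
        refine (sin_lip (π*s₂) (π*s₁)).trans ?_
        rw [show π*s₂ - π*s₁ = π*(s₂-s₁) by ring,
          abs_of_nonneg (mul_nonneg Real.pi_pos.le (sub_nonneg.mpr hs))]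
      have hC : |(|Real.sin (π*s₂)| - |Real.sin (π*s₁)|)| ≤ π * (s₂ - s₁) :=
        le_trans (abs_abs_sub_abs_le_abs_sub _ _) hA
      have hreal : |mixedInc h s₁ s₂ x₁ x₂| ≤
          π/2 * (s₂ - s₁) * |phiF x₂ - phiF x₁| + π/2 * (s₂ - s₁) * |chiF x₂ - chiF x₁| := by
        rw [e, abs_div, abs_two]
        have h1 : |(Real.sin (π*s₂) - Real.sin (π*s₁)) * (phiF x₂ - phiF x₁)
            + (|Real.sin (π*s₂)| - |Real.sin (π*s₁)|) * (chiF x₂ - chiF x₁)|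
            ≤ π * (s₂ - s₁) * |phiF x₂ - phiF x₁| + π * (s₂ - s₁) * |chiF x₂ - chiF x₁| := by
          refine (abs_add_le _ _).trans ?_
          rw [abs_mul, abs_mul]
          exact add_le_add (mul_le_mul_of_nonneg_right hA (abs_nonneg _))
            (mul_le_mul_of_nonneg_right hC (abs_nonneg _))
        linarith
      calc ENNReal.ofReal |mixedInc h s₁ s₂ x₁ x₂|
          ≤ ENNReal.ofReal (π/2 * (s₂ - s₁) * |phiF x₂ - phiF x₁|
              + π/2 * (s₂ - s₁) * |chiF x₂ - chiF x₁|) := ENNReal.ofReal_le_ofReal hreal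
        _ = ENNReal.ofReal (π/2 * (s₂ - s₁) * |phiF x₂ - phiF x₁|)
              + ENNReal.ofReal (π/2 * (s₂ - s₁) * |chiF x₂ - chiF x₁|) :=
            ENNReal.ofReal_add (mul_nonneg hc0 (abs_nonneg _)) (mul_nonneg hc0 (abs_nonneg _))
        _ = ENNReal.ofReal (π/2 * (s₂ - s₁)) * ENNReal.ofReal |phiF x₂ - phiF x₁|
              + ENNReal.ofReal (π/2 * (s₂ - s₁)) * ENNReal.ofReal |chiF x₂ - chiF x₁| := by
            rw [ENNReal.ofReal_mul hc0, ENNReal.ofReal_mul hc0]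
        _ = ENNReal.ofReal (π/2 * (s₂ - s₁)) *
              (ENNReal.ofReal |phiF x₂ - phiF x₁| + ENNReal.ofReal |chiF x₂ - chiF x₁|) := by
            rw [mul_add]
    have hCsum : ∑ i : Fin m, ENNReal.ofReal (π/2 * (σ i.succ - σ i.castSucc))
        = ENNReal.ofReal (π/2 * (t₂ - t₁)) := by
      rw [← ENNReal.ofReal_sum_of_nonneg (fun i _ => mul_nonneg (by positivity)
        (sub_nonneg.mpr (hσ.monotone (Fin.castSucc_le_succ i))))]
      congr 1
      rw [← Finset.mul_sum, fin_telescope σ, hσl, hσ0]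
    calc ∑ i : Fin m, ∑ j : Fin n,
          ENNReal.ofReal |mixedInc h (σ i.castSucc) (σ i.succ) (τ j.castSucc) (τ j.succ)|
        ≤ ∑ i : Fin m, ∑ j : Fin n, ENNReal.ofReal (π/2 * (σ i.succ - σ i.castSucc)) *
            (ENNReal.ofReal |phiF (τ j.succ) - phiF (τ j.castSucc)|
              + ENNReal.ofReal |chiF (τ j.succ) - chiF (τ j.castSucc)|) :=
          Finset.sum_le_sum fun i _ => Finset.sum_le_sum fun j _ => key i j
      _ = (∑ i : Fin m, ENNReal.ofReal (π/2 * (σ i.succ - σ i.castSucc))) *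
            (∑ j : Fin n, (ENNReal.ofReal |phiF (τ j.succ) - phiF (τ j.castSucc)|
              + ENNReal.ofReal |chiF (τ j.succ) - chiF (τ j.castSucc)|)) := by
          rw [Finset.sum_mul_sum]
      _ = ENNReal.ofReal (π/2 * (t₂ - t₁)) *
            (∑ j : Fin n, ENNReal.ofReal |phiF (τ j.succ) - phiF (τ j.castSucc)|
              + ∑ j : Fin n, ENNReal.ofReal |chiF (τ j.succ) - chiF (τ j.castSucc)|) := by
          rw [hCsum, Finset.sum_add_distrib]
      _ ≤ ENNReal.ofReal (π/2 * (t₂ - t₁)) *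
            (eVariationOn phiF (Icc a b) + eVariationOn chiF (Icc a b)) :=
          mul_le_mul' le_rfl (add_le_add
            (sum_abs_le_evar phiF τ hτ.monotone hτ0 hτl)
            (sum_abs_le_evar chiF τ hτ.monotone hτ0 hτl))
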